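/- Let B, C, D be finite subsets of ℤ^d, s₀ > d/2, and let 𝓜₁ ∈ 𝐌^C_D, 𝓜₂ ∈ 𝐌^B_C be complex matrices. Then ‖𝓜₁𝓜₂‖_{s₀} ≤ ‖𝓜₁‖_{s₀}‖𝓜₂‖_{s₀}, where ‖𝓜‖_s² = C₀(s₀) Σ_{k} (sup_{k₁-k₂=k}|𝓜(k₁,k₂)|)² ⟨k⟩^{2s} and C₀(s₀) is the algebra constant of the weighted ℓ² space of exponent s₀. In particular, for square matrices 𝓜 ∈ 𝐌^B_B and n ≥ 1, ‖𝓜^n‖_{s₀} ≤ ‖𝓜‖_{s₀}^n. -/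

import Mathlib

open scoped Pointwise BigOperators

/-- Weighted `ℓ²` Sobolev norm of a sequence on `ℤ^d`. -/
noncomputable def seqNorm (d : ℕ) (C₀ s : ℝ) (u : (Fin d → ℤ) → ℂ) : ℝ :=
  Real.sqrt (C₀ * ∑' k : Fin d → ℤ, ‖u k‖ ^ 2 * (max 1 ‖k‖) ^ (2 * s))

/-- Discrete convolution on `ℤ^d`. -/
noncomputable def seqConv (d : ℕ) (u₁ u₂ : (Fin d → ℤ) → ℂ) : (Fin d → ℤ) → ℂ :=
  fun k => ∑' k' : Fin d → ℤ, u₁ (k - k') * u₂ k'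

/-- The Sobolev norm of a matrix indexed by finite subsets of `ℤ^d`. -/
noncomputable def sobNorm (d : ℕ) (C₀ s : ℝ) {X₁ X₂ : Finset (Fin d → ℤ)}
    (M : Matrix X₁ X₂ ℂ) : ℝ :=
  Real.sqrt (C₀ * ∑ k ∈ X₁ - X₂,
    (sSup {x : ℝ | ∃ k₁ : X₁, ∃ k₂ : X₂, (k₁ : Fin d → ℤ) - (k₂ : Fin d → ℤ) = k ∧
        x = ‖M k₁ k₂‖}) ^ 2 * (max 1 ‖k‖) ^ (2 * s))

namespace Stmt18Aux

variable {d : ℕ} {X₁ X₂ : Finset (Fin d → ℤ)}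

/-- The set of absolute values of entries of `M` along the diagonal `k₁ - k₂ = k`. -/
def mset (M : Matrix X₁ X₂ ℂ) (k : Fin d → ℤ) : Set ℝ :=
  {x : ℝ | ∃ k₁ : X₁, ∃ k₂ : X₂, (k₁ : Fin d → ℤ) - (k₂ : Fin d → ℤ) = k ∧
      x = ‖M k₁ k₂‖}

/-- The maximal entry along the diagonal. -/
noncomputable def msup (M : Matrix X₁ X₂ ℂ) (k : Fin d → ℤ) : ℝ :=
  sSup (mset M k)

lemma mset_finite (M : Matrix X₁ X₂ ℂ) (k : Fin d → ℤ) : (mset M k).Finite := by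
  apply Set.Finite.subset (Set.finite_range (fun p : X₁ × X₂ => ‖M p.1 p.2‖))
  rintro x ⟨k₁, k₂, -, rfl⟩
  exact ⟨(k₁, k₂), rfl⟩

lemma mset_bdd (M : Matrix X₁ X₂ ℂ) (k : Fin d → ℤ) : BddAbove (mset M k) :=
  (mset_finite M k).bddAbove

lemma le_msup (M : Matrix X₁ X₂ ℂ) {k : Fin d → ℤ} (k₁ : X₁) (k₂ : X₂)
    (h : (k₁ : Fin d → ℤ) - (k₂ : Fin d → ℤ) = k) :
    ‖M k₁ k₂‖ ≤ msup M k :=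
  le_csSup (mset_bdd M k) ⟨k₁, k₂, h, rfl⟩

lemma msup_nonneg (M : Matrix X₁ X₂ ℂ) (k : Fin d → ℤ) : 0 ≤ msup M k := by
  rcases (mset M k).eq_empty_or_nonempty with h | ⟨x, hx⟩
  · simp [msup, h, Real.sSup_empty]
  · obtain ⟨k₁, k₂, hk, rfl⟩ := hx
    exact le_trans (norm_nonneg _) (le_msup M k₁ k₂ hk)

lemma msup_eq_zero (M : Matrix X₁ X₂ ℂ) {k : Fin d → ℤ} (h : k ∉ X₁ - X₂) :
    msup M k = 0 := by
  have : mset M k = ∅ := by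
    ext x
    simp only [Set.mem_empty_iff_false, iff_false]
    rintro ⟨k₁, k₂, hk, rfl⟩
    exact h (Finset.mem_sub.2 ⟨k₁, k₁.2, k₂, k₂.2, hk⟩)
  simp [msup, this, Real.sSup_empty]

/-- The maximal-coefficient sequence of a matrix. -/
noncomputable def mseq (M : Matrix X₁ X₂ ℂ) : (Fin d → ℤ) → ℂ :=
  fun k => ((msup M k : ℝ) : ℂ)

lemma mseq_support (M : Matrix X₁ X₂ ℂ) :
    Function.support (mseq M) ⊆ (X₁ - X₂ : Finset (Fin d → ℤ)) := by
  intro k hk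
  by_contra h
  exact hk (by simp [mseq, msup_eq_zero M h])

lemma mseq_support_finite (M : Matrix X₁ X₂ ℂ) : (Function.support (mseq M)).Finite :=
  Set.Finite.subset (X₁ - X₂ : Finset (Fin d → ℤ)).finite_toSet (mseq_support M)

lemma seqNorm_mseq (C₀ s : ℝ) (M : Matrix X₁ X₂ ℂ) :
    seqNorm d C₀ s (mseq M) = sobNorm d C₀ s M := by
  unfold seqNorm sobNorm
  congr 2
  rw [tsum_eq_sum (s := X₁ - X₂)
    (by
      intro k hk
      simp [mseq, msup_eq_zero M hk])]
  apply Finset.sum_congr rfl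
  intro k _
  rw [show ‖mseq M k‖ = msup M k by
    simp [mseq, Complex.norm_real, Real.norm_eq_abs, abs_of_nonneg (msup_nonneg M k)]]
  rfl

/-- Monotonicity of the sequence norm. -/
lemma seqNorm_mono (C₀ s : ℝ) (hC₀ : 0 ≤ C₀) (u v : (Fin d → ℤ) → ℂ)
    (h : ∀ k, ‖u k‖ ≤ ‖v k‖)
    (hv : (Function.support v).Finite) :
    seqNorm d C₀ s u ≤ seqNorm d C₀ s v := by
  unfold seqNorm
  apply Real.sqrt_le_sqrt
  apply mul_le_mul_of_nonneg_left _ hC₀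
  have hterm : ∀ (w : (Fin d → ℤ) → ℂ) (k : Fin d → ℤ),
      0 ≤ ‖w k‖ ^ 2 * (max 1 ‖k‖) ^ (2 * s) := fun w k =>
    mul_nonneg (sq_nonneg _) (Real.rpow_nonneg (le_trans zero_le_one (le_max_left _ _)) _)
  have hvs : Summable (fun k => ‖v k‖ ^ 2 * (max 1 ‖k‖) ^ (2 * s)) := by
    apply summable_of_ne_finset_zero (s := hv.toFinset)
    intro k hk
    have : v k = 0 := by
      by_contra hne
      exact hk (hv.mem_toFinset.2 hne)
    simp [this]
  have hle : ∀ k, ‖u k‖ ^ 2 * (max 1 ‖k‖) ^ (2 * s)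
      ≤ ‖v k‖ ^ 2 * (max 1 ‖k‖) ^ (2 * s) := by
    intro k
    apply mul_le_mul_of_nonneg_right _
      (Real.rpow_nonneg (le_trans zero_le_one (le_max_left _ _)) _)
    exact pow_le_pow_left₀ (norm_nonneg _) (h k) 2
  exact Summable.tsum_le_tsum hle (hvs.of_nonneg_of_le (fun k => hterm u k) hle) hvs

end Stmt18Aux

open Stmt18Aux in
theorem stmt_18 (d : ℕ) (hd : 1 ≤ d) (s₀ : ℝ) (hs₀ : (d : ℝ) / 2 < s₀) (C₀ : ℝ) (hC₀ : 0 < C₀)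
    (halg : ∀ u₁ u₂ : (Fin d → ℤ) → ℂ,
      (Function.support u₁).Finite → (Function.support u₂).Finite →
      seqNorm d C₀ s₀ (seqConv d u₁ u₂) ≤ seqNorm d C₀ s₀ u₁ * seqNorm d C₀ s₀ u₂) :
    (∀ (B C D : Finset (Fin d → ℤ)) (M₁ : Matrix B C ℂ) (M₂ : Matrix C D ℂ),
      sobNorm d C₀ s₀ (M₁ * M₂) ≤ sobNorm d C₀ s₀ M₁ * sobNorm d C₀ s₀ M₂) ∧
    (∀ (B : Finset (Fin d → ℤ)) (M : Matrix B B ℂ) (n : ℕ), 1 ≤ n →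
      sobNorm d C₀ s₀ (M ^ n) ≤ sobNorm d C₀ s₀ M ^ n) := by
  have main : ∀ (B C D : Finset (Fin d → ℤ)) (M₁ : Matrix B C ℂ) (M₂ : Matrix C D ℂ),
      sobNorm d C₀ s₀ (M₁ * M₂) ≤ sobNorm d C₀ s₀ M₁ * sobNorm d C₀ s₀ M₂ := by
    intro B C D M₁ M₂
    -- the real convolution of the maximal sequences
    set r : (Fin d → ℤ) → ℝ := fun k => ∑' k', msup M₁ (k - k') * msup M₂ k' with hr
    have hg_zero : ∀ (k : Fin d → ℤ) k', k' ∉ (C - D : Finset (Fin d → ℤ)) →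
        msup M₁ (k - k') * msup M₂ k' = 0 := by
      intro k k' hk'
      rw [msup_eq_zero M₂ hk', mul_zero]
    have hsum : ∀ k : Fin d → ℤ, Summable (fun k' => msup M₁ (k - k') * msup M₂ k') :=
      fun k => summable_of_ne_finset_zero (s := C - D) (hg_zero k)
    have hrsum : ∀ k : Fin d → ℤ,
        r k = ∑ k' ∈ (C - D : Finset (Fin d → ℤ)), msup M₁ (k - k') * msup M₂ k' := by
      intro k
      exact tsum_eq_sum (hg_zero k)
    have hrnn : ∀ k, 0 ≤ r k := by
      intro k
      rw [hrsum]
      exact Finset.sum_nonneg fun k' _ => mul_nonneg (msup_nonneg _ _) (msup_nonneg _ _)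
    -- the complex convolution equals the real one
    have hconv : ∀ k, seqConv d (mseq M₁) (mseq M₂) k = ((r k : ℝ) : ℂ) := by
      intro k
      unfold seqConv
      rw [tsum_eq_sum (s := (C - D : Finset (Fin d → ℤ)))
        (by
          intro k' hk'
          simp [mseq, msup_eq_zero M₂ hk']), hrsum]
      push_cast
      rfl
    -- pointwise bound: |(M₁M₂)(k₁,k₂)| ≤ r (k₁ - k₂)
    have hbd : ∀ (k : Fin d → ℤ) (k₁ : B) (k₂ : D),
        (k₁ : Fin d → ℤ) - (k₂ : Fin d → ℤ) = k →
        ‖(M₁ * M₂) k₁ k₂‖ ≤ r k := by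
      rintro k k₁ k₂ rfl
      rw [Matrix.mul_apply]
      calc ‖∑ k₃ : C, M₁ k₁ k₃ * M₂ k₃ k₂‖
          ≤ ∑ k₃ : C, ‖M₁ k₁ k₃ * M₂ k₃ k₂‖ := norm_sum_le _ _
        _ ≤ ∑ k₃ : C, msup M₁ ((k₁ : Fin d → ℤ) - (k₃ : Fin d → ℤ)) *
              msup M₂ ((k₃ : Fin d → ℤ) - (k₂ : Fin d → ℤ)) := by
            apply Finset.sum_le_sum
            intro k₃ _
            rw [norm_mul]
            exact mul_le_mul (le_msup M₁ k₁ k₃ rfl) (le_msup M₂ k₃ k₂ rfl)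
              (norm_nonneg _) (msup_nonneg _ _)
        _ = ∑ k₃ ∈ C, msup M₁ ((k₁ : Fin d → ℤ) - k₃) * msup M₂ (k₃ - (k₂ : Fin d → ℤ)) := by
            exact Finset.sum_coe_sort C (fun k₃ =>
              msup M₁ ((k₁ : Fin d → ℤ) - k₃) * msup M₂ (k₃ - (k₂ : Fin d → ℤ)))
        _ = ∑ k' ∈ C.image (· - (k₂ : Fin d → ℤ)),
              msup M₁ (((k₁ : Fin d → ℤ) - (k₂ : Fin d → ℤ)) - k') * msup M₂ k' := by
            rw [Finset.sum_image (by intro x _ y _ h; exact sub_left_injective h)]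
            apply Finset.sum_congr rfl
            intro k₃ _
            congr 2
            abel
        _ ≤ r ((k₁ : Fin d → ℤ) - (k₂ : Fin d → ℤ)) := by
            apply Summable.sum_le_tsum _ _ (hsum _)
            intro k' _
            exact mul_nonneg (msup_nonneg _ _) (msup_nonneg _ _)
    -- conclude
    have hmono : seqNorm d C₀ s₀ (mseq (M₁ * M₂))
        ≤ seqNorm d C₀ s₀ (seqConv d (mseq M₁) (mseq M₂)) := by
      apply seqNorm_mono C₀ s₀ hC₀.le
      · intro k
        rw [hconv k]
        rw [show ‖mseq (M₁ * M₂) k‖ = msup (M₁ * M₂) k by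
          simp [mseq, Complex.norm_real, Real.norm_eq_abs, abs_of_nonneg (msup_nonneg _ _)]]
        rw [Complex.norm_real, Real.norm_eq_abs, abs_of_nonneg (hrnn k)]
        apply Real.sSup_le _ (hrnn k)
        rintro x ⟨k₁, k₂, hk, rfl⟩
        exact hbd k k₁ k₂ hk
      · -- finite support of the convolution
        apply Set.Finite.subset ((B - C : Finset (Fin d → ℤ)) + (C - D : Finset _)).finite_toSet
        intro k hk
        rw [Function.mem_support, hconv k] at hk
        have : r k ≠ 0 := by
          intro h
          exact hk (by rw [h]; simp)
        by_contra hmem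
        apply this
        rw [hrsum]
        apply Finset.sum_eq_zero
        intro k' hk'
        by_contra hne
        have h1 : msup M₁ (k - k') ≠ 0 := fun h => hne (by rw [h, zero_mul])
        have h2 : msup M₂ k' ≠ 0 := fun h => hne (by rw [h, mul_zero])
        have hm1 : k - k' ∈ (B - C : Finset (Fin d → ℤ)) := by
          by_contra h
          exact h1 (msup_eq_zero M₁ h)
        have hm2 : k' ∈ (C - D : Finset (Fin d → ℤ)) := by
          by_contra h
          exact h2 (msup_eq_zero M₂ h)
        have hadd := Finset.add_mem_add hm1 hm2
        rw [sub_add_cancel] at hadd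
        exact hmem (Finset.mem_coe.2 hadd)
    calc sobNorm d C₀ s₀ (M₁ * M₂) = seqNorm d C₀ s₀ (mseq (M₁ * M₂)) :=
          (seqNorm_mseq C₀ s₀ _).symm
      _ ≤ seqNorm d C₀ s₀ (seqConv d (mseq M₁) (mseq M₂)) := hmono
      _ ≤ seqNorm d C₀ s₀ (mseq M₁) * seqNorm d C₀ s₀ (mseq M₂) :=
          halg _ _ (mseq_support_finite M₁) (mseq_support_finite M₂)
      _ = sobNorm d C₀ s₀ M₁ * sobNorm d C₀ s₀ M₂ := by
          rw [seqNorm_mseq, seqNorm_mseq]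
  refine ⟨main, ?_⟩
  intro B M n hn
  induction n with
  | zero => omega
  | succ m ih =>
    rcases Nat.eq_or_lt_of_le hn with h | h
    · rw [← h]
      simp [pow_one]
    · have hm : 1 ≤ m := by omega
      calc sobNorm d C₀ s₀ (M ^ (m + 1)) = sobNorm d C₀ s₀ (M ^ m * M) := by rw [pow_succ]
        _ ≤ sobNorm d C₀ s₀ (M ^ m) * sobNorm d C₀ s₀ M := main B B B _ _
        _ ≤ sobNorm d C₀ s₀ M ^ m * sobNorm d C₀ s₀ M :=
            mul_le_mul_of_nonneg_right (ih hm) (Real.sqrt_nonneg _)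
        _ = sobNorm d C₀ s₀ M ^ (m + 1) := (pow_succ _ _).symm
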